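/- There exists a locally finite pseudovariety V of finite semigroups such that the Mal'cev product V ⓜ N is not locally countable, where N is the pseudovariety of all finite nilpotent semigroups. -/

import Mathlib

/-- A bundled finite semigroup. -/
structure FinSgp : Type 1 where
  carrier : Type
  [str : Semigroup carrier]
  [fin : Finite carrier]

attribute [instance] FinSgp.str FinSgp.fin

/-- Finite semigroups carry the discrete topology. -/
instance (T : FinSgp) : TopologicalSpace T.carrier := ⊥

instance (T : FinSgp) : DiscreteTopology T.carrier := ⟨rfl⟩

/-- A pseudovariety of finite semigroups: a class of finite semigroups closed under
homomorphic images, (isomorphic copies of) subsemigroups, and binary direct products. -/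
def IsPseudovariety (V : Set FinSgp) : Prop :=
  (∀ S ∈ V, ∀ (T : FinSgp) (f : S.carrier →ₙ* T.carrier), Function.Surjective f → T ∈ V) ∧
  (∀ S ∈ V, ∀ (T : FinSgp) (f : T.carrier →ₙ* S.carrier), Function.Injective f → T ∈ V) ∧
  (∀ S ∈ V, ∀ T ∈ V, (FinSgp.mk (S.carrier × T.carrier)) ∈ V)

/-- A profinite semigroup: a compact, Hausdorff, totally disconnected topological semigroup. -/
def IsProfiniteSgp (S : Type) [Semigroup S] [TopologicalSpace S] : Prop :=
  ContinuousMul S ∧ CompactSpace S ∧ T2Space S ∧ TotallyDisconnectedSpace S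

/-- A pro-V semigroup: a profinite semigroup whose points are separated by continuous
homomorphisms onto finite semigroups belonging to V. -/
def IsProV (V : Set FinSgp) (S : Type) [Semigroup S] [TopologicalSpace S] : Prop :=
  IsProfiniteSgp S ∧ ∀ x y : S, x ≠ y →
    ∃ (T : FinSgp) (f : S →ₙ* T.carrier),
      T ∈ V ∧ Continuous f ∧ Function.Surjective f ∧ f x ≠ f y

/-- `A` topologically generates the topological semigroup `S`. -/
def TopGen (S : Type) [Semigroup S] [TopologicalSpace S] (A : Set S) : Prop :=
  closure ((Subsemigroup.closure A : Subsemigroup S) : Set S) = Set.univ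

/-- A topological semigroup is locally countable if every closed subsemigroup
topologically generated by a finite subset is countable. -/
def IsLocCountable (S : Type) [Semigroup S] [TopologicalSpace S] : Prop :=
  ∀ A : Set S, A.Finite →
    (closure ((Subsemigroup.closure A : Subsemigroup S) : Set S)).Countable

/-- A pseudovariety is locally countable if every pro-V semigroup is locally countable. -/
def PVLocallyCountable (V : Set FinSgp) : Prop :=
  ∀ (S : Type) [Semigroup S] [TopologicalSpace S], IsProV V S → IsLocCountable S

/-- A pseudovariety is locally finite if every finitely generated pro-V semigroup is finite. -/
def PVLocallyFinite (V : Set FinSgp) : Prop :=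
  ∀ (S : Type) [Semigroup S] [TopologicalSpace S], IsProV V S →
    (∃ A : Set S, A.Finite ∧ TopGen S A) → Finite S

/-- The join of two pseudovarieties: the smallest pseudovariety containing both. -/
def PVJoin (V W : Set FinSgp) : Set FinSgp :=
  ⋂₀ {U | IsPseudovariety U ∧ V ⊆ U ∧ W ⊆ U}

/-- The preimage of an idempotent under a semigroup homomorphism, as a subsemigroup. -/
def idemFiber {S T : Type} [Semigroup S] [Semigroup T] (f : S →ₙ* T)
    (e : T) (he : e * e = e) : Subsemigroup S where
  carrier := f ⁻¹' {e}
  mul_mem' := fun {a b} ha hb => by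
    simp only [Set.mem_preimage, Set.mem_singleton_iff] at ha hb ⊢
    rw [map_mul, ha, hb, he]

/-- A subsemigroup of a finite semigroup, as a bundled finite semigroup. -/
def subFinSgp {S : Type} [Semigroup S] [Finite S] (T : Subsemigroup S) : FinSgp :=
  FinSgp.mk T

/-- The generators of the Mal'cev product `V ⓜ W`: finite semigroups `S` admitting a
homomorphism onto some `T ∈ W` whose fibers over idempotents lie in `V`. -/
def MalcevWitness (V W : Set FinSgp) (S : FinSgp) : Prop :=
  ∃ (T : FinSgp) (f : S.carrier →ₙ* T.carrier), T ∈ W ∧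
    ∀ (e : T.carrier) (he : e * e = e), subFinSgp (idemFiber f e he) ∈ V

/-- The Mal'cev product of two pseudovarieties: the smallest pseudovariety containing
all its generators. -/
def Malcev (V W : Set FinSgp) : Set FinSgp :=
  ⋂₀ {U | IsPseudovariety U ∧ ∀ S : FinSgp, MalcevWitness V W S → S ∈ U}

/-- Green's preorder `≤_L`. -/
def lLE {S : Type} [Semigroup S] (u v : S) : Prop := u = v ∨ ∃ x, u = x * v

/-- Green's relation `L`. -/
def GreenL {S : Type} [Semigroup S] (u v : S) : Prop := lLE u v ∧ lLE v u

/-- Green's preorder `≤_J`. -/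
def jLE {S : Type} [Semigroup S] (u v : S) : Prop :=
  u = v ∨ (∃ x, u = v * x) ∨ (∃ x, u = x * v) ∨ (∃ x y, u = x * v * y)

/-- Green's relation `J`. -/
def GreenJ {S : Type} [Semigroup S] (u v : S) : Prop := jLE u v ∧ jLE v u

/-- A regular element of a semigroup. -/
def IsRegularElt {S : Type} [Semigroup S] (s : S) : Prop := ∃ t, s = s * t * s

/-- `S` has only finitely many regular `J`-classes. -/
def FinManyRegJ (S : Type) [Semigroup S] : Prop :=
  ∃ F : Set S, F.Finite ∧ ∀ s : S, IsRegularElt s → ∃ t ∈ F, GreenJ s t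

/-- A subgroup of a semigroup: a subsemigroup which is a group under the induced
multiplication. -/
def IsSgpSubgroup (S : Type) [Semigroup S] (G : Set S) : Prop :=
  (∀ x ∈ G, ∀ y ∈ G, x * y ∈ G) ∧
  ∃ e ∈ G, (∀ x ∈ G, e * x = x ∧ x * e = x) ∧ (∀ x ∈ G, ∃ y ∈ G, x * y = e ∧ y * x = e)

/-- A group element of a semigroup: an element lying in some subgroup. -/
def IsGroupElt (S : Type) [Semigroup S] (s : S) : Prop :=
  ∃ G : Set S, IsSgpSubgroup S G ∧ s ∈ G

/-- `prodFrom f n` is the product `f 0 * f 1 * ⋯ * f n`. -/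
def prodFrom {S : Type} [Semigroup S] (f : ℕ → S) : ℕ → S
  | 0 => f 0
  | n + 1 => prodFrom f n * f (n + 1)

/-- A semigroup is nilpotent if it has a zero element and some length bound beyond
which all products equal zero. -/
def IsNilpotentSgp (S : Type) [Semigroup S] : Prop :=
  ∃ z : S, (∀ x : S, z * x = z ∧ x * z = z) ∧ ∃ n : ℕ, ∀ f : ℕ → S, prodFrom f n = z

/-- The pseudovariety `N` of finite nilpotent semigroups. -/
def NPv : Set FinSgp := {S | IsNilpotentSgp S.carrier}

/-- A semigroup which is a group. -/
def IsGroupSgp (S : Type) [Semigroup S] : Prop :=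
  ∃ e : S, (∀ x : S, e * x = x ∧ x * e = x) ∧ ∀ x : S, ∃ y : S, x * y = e ∧ y * x = e

/-- The pseudovariety `LG` of finite local groups: `eSe` is a group for each idempotent `e`. -/
def LG : Set FinSgp :=
  {S | ∀ e : S.carrier, e * e = e → ∀ s : S.carrier,
      ∃ t : S.carrier, (e * s * e) * (e * t * e) = e ∧ (e * t * e) * (e * s * e) = e}

/-- The pseudovariety `IE` of finite semigroups with exactly one idempotent. -/
def IE : Set FinSgp := {S | ∃! e : S.carrier, e * e = e}

/-- A bundled topological semigroup (carrier, multiplication, topology). -/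
structure TopSgp : Type 1 where
  carrier : Type
  [str : Semigroup carrier]
  [top : TopologicalSpace carrier]

attribute [instance] TopSgp.str TopSgp.top

/-- The fiber of a relational morphism over an idempotent, as a subsemigroup of the
domain. -/
def relFiber {S T : Type} [Semigroup S] [Semigroup T] (μ : Subsemigroup (S × T))
    (e : T) (he : e * e = e) : Subsemigroup S where
  carrier := {s | (s, e) ∈ μ}
  mul_mem' := fun {a b} ha hb => by
    have h := μ.mul_mem ha hb
    simpa [Prod.mk_mul_mk, he] using h

/-- `spow x n = x ^ (n + 1)` in a semigroup. -/
def spow {S : Type} [Semigroup S] (x : S) : ℕ → S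
  | 0 => x
  | n + 1 => spow x n * x

/-- The pseudovariety `A ∩ ESl` of finite aperiodic semigroups with commuting idempotents. -/
def AESl : Set FinSgp :=
  {S | (∃ n : ℕ, ∀ x : S.carrier, spow x (n + 1) = spow x n) ∧
       (∀ e f : S.carrier, e * e = e → f * f = f → e * f = f * e)}


/-! ### Auxiliary development -/

section Aux

open List

/-- last `k` elements of a list -/
def lastN {α : Type} (k : ℕ) (l : List α) : List α := l.drop (l.length - k)

theorem length_lastN {α : Type} (k : ℕ) (l : List α) :
    (lastN k l).length = min k l.length := by
  simp [lastN]; omega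

theorem lastN_of_le {α : Type} {k : ℕ} {l : List α} (h : l.length ≤ k) : lastN k l = l := by
  simp [lastN, Nat.sub_eq_zero_of_le h]

theorem lastN_append_right {α : Type} {k : ℕ} (x : List α) {y : List α} (h : k ≤ y.length) :
    lastN k (x ++ y) = lastN k y := by
  unfold lastN
  have h1 : x.length + y.length - k = x.length + (y.length - k) := by omega
  rw [List.length_append, h1, ← List.drop_drop, List.drop_left]

theorem lastN_append_absorb {α : Type} {k : ℕ} (x y : List α) :
    lastN k (lastN k x ++ y) = lastN k (x ++ y) := by
  by_cases h : k ≤ y.length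
  · rw [lastN_append_right _ h, lastN_append_right _ h]
  · push_neg at h
    have h1 : (lastN k x).length = min k x.length := length_lastN k x
    simp only [lastN, List.length_append] at *
    rw [List.drop_append_of_le_length (by omega), List.drop_append_of_le_length (by omega),
      List.drop_drop]
    congr 2
    omega

theorem lastN_replicate {α : Type} (k j : ℕ) (a : α) :
    lastN k (List.replicate j a) = List.replicate (min k j) a := by
  unfold lastN
  rw [List.length_replicate, List.drop_replicate]
  congr 1
  omega

/-- The carrier of the nilpotent truncation semigroup: words of length at most `n`,
with `[]` playing the role of the zero. -/
def TCar (n : ℕ) : Type := {l : List Bool // l.length ≤ n}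

/-- multiplication on underlying lists -/
def vmul (n : ℕ) (x y : List Bool) : List Bool :=
  if x ≠ [] ∧ y ≠ [] ∧ x.length + y.length ≤ n then x ++ y else []

theorem vmul_length {n : ℕ} (x y : List Bool) : (vmul n x y).length ≤ n := by
  unfold vmul; split_ifs with h
  · simpa using h.2.2
  · simp

theorem vmul_assoc (n : ℕ) (x y z : List Bool) :
    vmul n (vmul n x y) z = vmul n x (vmul n y z) := by
  unfold vmul
  by_cases hx : x = [] <;> by_cases hy : y = [] <;> by_cases hz : z = [] <;>
    split_ifs <;> simp_all [List.length_append] <;> omega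

instance : Semigroup (TCar n) where
  mul a b := ⟨vmul n a.1 b.1, vmul_length _ _⟩
  mul_assoc a b c := Subtype.ext (vmul_assoc n a.1 b.1 c.1)

theorem TCar.mul_val {n : ℕ} (a b : TCar n) : (a * b).1 = vmul n a.1 b.1 := rfl

/-- the zero of `TCar n` -/
def TCar.z (n : ℕ) : TCar n := ⟨[], by simp⟩

theorem TCar.z_mul {n : ℕ} (a : TCar n) : TCar.z n * a = TCar.z n := by
  apply Subtype.ext; rw [TCar.mul_val]; simp [vmul, TCar.z]

theorem TCar.mul_z {n : ℕ} (a : TCar n) : a * TCar.z n = TCar.z n := by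
  apply Subtype.ext; rw [TCar.mul_val]; simp [vmul, TCar.z]

theorem TCar.idem_eq_z {n : ℕ} (e : TCar n) (he : e * e = e) : e = TCar.z n := by
  by_contra hne
  have hv : e.1 ≠ [] := fun h => hne (Subtype.ext (by simp [TCar.z, h]))
  have hlen : e.1.length ≠ 0 := by simpa using hv
  have := congrArg (fun t : TCar n => t.1.length) he
  simp only [TCar.mul_val, vmul] at this
  split_ifs at this with h
  · simp only [List.length_append] at this; omega
  · simp only [List.length_nil] at this; omega

/-- truncation of a word -/
def trunc (n : ℕ) (w : List Bool) : TCar n :=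
  ⟨if w.length ≤ n then w else [], by split_ifs with h <;> simp [h]⟩

theorem trunc_mul {n : ℕ} {w₁ w₂ : List Bool} (h₁ : w₁ ≠ []) (h₂ : w₂ ≠ []) :
    trunc n (w₁ ++ w₂) = trunc n w₁ * trunc n w₂ := by
  apply Subtype.ext
  rw [TCar.mul_val]
  have e : ∀ w, (trunc n w).1 = if w.length ≤ n then w else [] := fun _ => rfl
  simp only [e, vmul, List.length_append]
  by_cases hs : w₁.length + w₂.length ≤ n
  · rw [if_pos (show w₁.length ≤ n by omega), if_pos (show w₂.length ≤ n by omega),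
      if_pos hs, if_pos ⟨h₁, h₂, hs⟩]
  · rw [if_neg hs]
    split_ifs <;> simp_all

theorem trunc_z {n : ℕ} {w : List Bool} (hw : w ≠ []) (h : trunc n w = TCar.z n) :
    n < w.length := by
  by_contra h'
  push_neg at h'
  have : (trunc n w).1 = w := by simp [trunc, h']
  rw [h] at this
  exact hw (by simpa [TCar.z] using this.symm)

end Aux
section Aux2

/-- states: words of length `< n`, `none` is the sink -/
abbrev SCar (n : ℕ) : Type := {l : List Bool // l.length < n}

abbrev QC (n : ℕ) : Type := Option (SCar n)

/-- the detector word `t f^(n-2) t` -/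
def uw (n : ℕ) : List Bool := true :: (List.replicate (n - 2) false ++ [true])

/-- one automaton step -/
def stp (n : ℕ) : QC n → Bool → QC n
  | none, _ => none
  | some s, c =>
      if s.1 ++ [c] = uw n then none
      else some ⟨lastN (n - 1) (s.1 ++ [c]), by
        have := s.2
        simp only [length_lastN, List.length_append, List.length_cons]
        omega⟩

def runw (n : ℕ) (q : QC n) (w : List Bool) : QC n := w.foldl (stp n) q

theorem runw_append (n : ℕ) (q : QC n) (w₁ w₂ : List Bool) :
    runw n q (w₁ ++ w₂) = runw n (runw n q w₁) w₂ := List.foldl_append ..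

theorem runw_none (n : ℕ) (w : List Bool) : runw n none w = none := by
  induction w with
  | nil => rfl
  | cons c w ih => exact ih

/-- function semigroup with reversed composition -/
def FE (n : ℕ) : Type := QC n → QC n

instance : Semigroup (FE n) where
  mul f g := g ∘ f
  mul_assoc f g h := rfl

theorem FE.mul_apply {n : ℕ} (f g : FE n) (q : QC n) : (f * g) q = g (f q) := rfl

/-- the coordinate semigroup -/
def CC (n : ℕ) : Type := TCar n × FE n

instance : Semigroup (CC n) := inferInstanceAs (Semigroup (TCar n × FE n))

theorem CC.fst_mul {n : ℕ} (a b : CC n) : (a * b).1 = a.1 * b.1 := rfl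
theorem CC.snd_mul {n : ℕ} (a b : CC n) : (a * b).2 = a.2 * b.2 := rfl

/-- evaluation of a word in the coordinate semigroup -/
def ev (n : ℕ) (w : List Bool) : CC n := (trunc n w, fun q => runw n q w)

theorem ev_mul {n : ℕ} {w₁ w₂ : List Bool} (h₁ : w₁ ≠ []) (h₂ : w₂ ≠ []) :
    ev n (w₁ ++ w₂) = ev n w₁ * ev n w₂ := by
  apply Prod.ext
  · exact trunc_mul h₁ h₂
  · funext q
    exact runw_append n q w₁ w₂

/-- Finiteness of bounded-length word types -/
theorem finite_len_le (n : ℕ) : Finite (TCar n) := by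
  apply Finite.of_injective (fun l : TCar n => (fun i : Fin (n+1) => l.1[(i:ℕ)]?))
  intro a b h
  have ha := a.2
  have hb := b.2
  apply Subtype.ext
  apply List.ext_getElem?
  intro i
  by_cases hi : i < n + 1
  · exact congrFun h ⟨i, hi⟩
  · rw [List.getElem?_eq_none (by omega : a.1.length ≤ i),
      List.getElem?_eq_none (by omega : b.1.length ≤ i)]

instance : Finite (TCar n) := finite_len_le n

def SCar.toT {n : ℕ} (l : SCar n) : TCar n := ⟨l.1, l.2.le⟩

instance : Finite (SCar n) := by
  apply Finite.of_injective (fun l : SCar n => l.toT)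
  intro a b h
  have h' : a.toT = b.toT := h
  exact Subtype.ext (congrArg (fun t : TCar n => t.1) h')

instance : Finite (QC n) :=
  Finite.of_equiv ((SCar n) ⊕ PUnit.{1}) (Equiv.optionEquivSumPUnit.{0,0} (SCar n)).symm
instance : Finite (FE n) := inferInstanceAs (Finite (QC n → QC n))
instance : Finite (CC n) := inferInstanceAs (Finite (TCar n × FE n))

instance : TopologicalSpace (CC n) := ⊥
instance : DiscreteTopology (CC n) := ⟨rfl⟩

/-- the big ambient product -/
def PP : Type := ∀ n : ℕ, CC n

instance : Semigroup PP := inferInstanceAs (Semigroup (∀ n : ℕ, CC n))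
instance : TopologicalSpace PP := inferInstanceAs (TopologicalSpace (∀ n : ℕ, CC n))

theorem PP.mul_apply (a b : PP) (n : ℕ) : (a * b) n = a n * b n := rfl

instance : ContinuousMul (CC n) := ⟨continuous_of_discreteTopology⟩
instance : ContinuousMul PP := inferInstanceAs (ContinuousMul (∀ n : ℕ, CC n))
instance : CompactSpace PP := inferInstanceAs (CompactSpace (∀ n : ℕ, CC n))
instance : T2Space PP := inferInstanceAs (T2Space (∀ n : ℕ, CC n))
instance : TotallyDisconnectedSpace PP :=
  inferInstanceAs (TotallyDisconnectedSpace (∀ n : ℕ, CC n))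

/-- evaluation of a word in the product -/
def EW (w : List Bool) : PP := fun n => ev n w

theorem EW_mul {w₁ w₂ : List Bool} (h₁ : w₁ ≠ []) (h₂ : w₂ ≠ []) :
    EW (w₁ ++ w₂) = EW w₁ * EW w₂ := by
  funext n
  exact ev_mul h₁ h₂

/-- the generated subsemigroup -/
def GG : Subsemigroup PP := Subsemigroup.closure {EW [false], EW [true]}

theorem EW_mem_GG {w : List Bool} (hw : w ≠ []) : EW w ∈ GG := by
  induction w using List.reverseRecOn with
  | nil => exact absurd rfl hw
  | append_singleton w c ih =>
    rcases List.eq_nil_or_concat' w with rfl | h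
    · cases c
      · exact Subsemigroup.subset_closure (Or.inl rfl)
      · exact Subsemigroup.subset_closure (Or.inr rfl)
    · have hw' : w ≠ [] := by rintro rfl; simp at h
      rw [EW_mul hw' (by simp)]
      apply GG.mul_mem (ih hw')
      cases c
      · exact Subsemigroup.subset_closure (Or.inl rfl)
      · exact Subsemigroup.subset_closure (Or.inr rfl)

/-- the word-image subsemigroup at a coordinate -/
def Wn (n : ℕ) : Subsemigroup (CC n) := Subsemigroup.closure {ev n [false], ev n [true]}

theorem ev_mem_Wn {n : ℕ} {w : List Bool} (hw : w ≠ []) : ev n w ∈ Wn n := by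
  induction w using List.reverseRecOn with
  | nil => exact absurd rfl hw
  | append_singleton w c ih =>
    rcases List.eq_nil_or_concat' w with rfl | h
    · cases c
      · exact Subsemigroup.subset_closure (Or.inl rfl)
      · exact Subsemigroup.subset_closure (Or.inr rfl)
    · have hw' : w ≠ [] := by rintro rfl; simp at h
      rw [ev_mul hw' (by simp)]
      apply (Wn n).mul_mem (ih hw')
      cases c
      · exact Subsemigroup.subset_closure (Or.inl rfl)
      · exact Subsemigroup.subset_closure (Or.inr rfl)

theorem Wn_char {n : ℕ} {z : CC n} (hz : z ∈ Wn n) : ∃ w : List Bool, w ≠ [] ∧ ev n w = z := by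
  induction hz using Subsemigroup.closure_induction with
  | mem x hx =>
    rcases hx with h | h
    · exact ⟨[false], List.cons_ne_nil _ _, h.symm⟩
    · exact ⟨[true], List.cons_ne_nil _ _, h.symm⟩
  | mul x y hx hy ihx ihy =>
    obtain ⟨w₁, hw₁, rfl⟩ := ihx
    obtain ⟨w₂, hw₂, rfl⟩ := ihy
    exact ⟨w₁ ++ w₂, by simp [hw₁], ev_mul hw₁ hw₂⟩

end Aux2
section Aux3

/-- run of `false`s -/
def fs (k : ℕ) : List Bool := List.replicate k false

theorem fs_length (k : ℕ) : (fs k).length = k := List.length_replicate ..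

/-- the separator -/
def sepw (m : ℕ) : List Bool := fs (m + 1)

/-- the block encoding `p` -/
def blk (m p : ℕ) : List Bool := true :: (fs p ++ (true :: sepw m))

/-- the word approximating the limit point attached to `P` at stage `m` -/
def wrd (P : ℕ → Bool) (m : ℕ) : List Bool :=
  sepw m ++ ((List.range (m + 1)).filter P).flatMap (blk m)

theorem sepw_ne_nil (m : ℕ) : sepw m ≠ [] := by simp [sepw, fs]

theorem wrd_length (P : ℕ → Bool) (m : ℕ) : m + 1 ≤ (wrd P m).length := by
  have : (wrd P m).length = (sepw m).length + _ := List.length_append ..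
  simp only [sepw, fs, List.length_replicate] at this
  omega

theorem wrd_ne_nil (P : ℕ → Bool) (m : ℕ) : wrd P m ≠ [] := by
  have := wrd_length P m
  intro h
  rw [h] at this
  simp at this

/-- a list of `false`s followed by anything is never the detector -/
theorem repF_ne_uw {n k : ℕ} (hk : 1 ≤ k) (r : List Bool) :
    List.replicate k false ++ r ≠ uw n := by
  intro h
  have h0 := congrArg (fun l => l.head?) h
  cases k with
  | zero => omega
  | succ k => simp [uw, List.replicate_succ, List.head?_append] at h0

theorem append_false_ne_uw {n : ℕ} (s : List Bool) : s ++ [false] ≠ uw n := by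
  intro h
  have := congrArg List.getLast? h
  rw [List.getLast?_concat] at this
  have huw : uw n = (true :: List.replicate (n - 2) false) ++ [true] := by simp [uw]
  rw [huw, List.getLast?_concat] at this
  simp at this

/-- the canonical new state -/
def pushS {n : ℕ} (s : SCar n) (x : List Bool) : SCar n :=
  ⟨lastN (n - 1) x, by have := s.2; simp only [length_lastN]; omega⟩

theorem runw_singleton {n : ℕ} (q : QC n) (c : Bool) : runw n q [c] = stp n q c := rfl

theorem stp_false {n : ℕ} (s : SCar n) :
    stp n (some s) false = some (pushS s (s.1 ++ [false])) := by
  simp only [stp, pushS]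
  exact if_neg (append_false_ne_uw s.1)

theorem runw_fs {n : ℕ} (k : ℕ) (s : SCar n) :
    runw n (some s) (fs k) = some (pushS s (s.1 ++ fs k)) := by
  induction k with
  | zero =>
    simp only [fs, List.replicate, runw, List.foldl_nil, List.append_nil]
    congr 1
    exact Subtype.ext (lastN_of_le (by have := s.2; omega)).symm
  | succ k ih =>
    have h1 : fs (k + 1) = fs k ++ [false] := List.replicate_succ' ..
    rw [h1, ← List.append_assoc, runw_append, ih, runw_singleton, stp_false]
    congr 1
    apply Subtype.ext
    exact lastN_append_absorb _ _

/-- the resting state: `n-1` falses -/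
def fsS (n : ℕ) (h : 1 ≤ n) : SCar n := ⟨fs (n - 1), by simp [fs]; omega⟩

theorem runw_fs_long {n k : ℕ} (hn : 1 ≤ n) (hk : n - 1 ≤ k) (s : SCar n) :
    runw n (some s) (fs k) = some (fsS n hn) := by
  rw [runw_fs]
  congr 1
  apply Subtype.ext
  show lastN (n-1) (s.1 ++ fs k) = fs (n - 1)
  rw [lastN_append_right _ (by simp [fs]; omega)]
  simp only [fs, lastN_replicate]
  congr 1
  omega

/-- reading a block from the resting state, non-detecting case -/
theorem runw_blk {n m p : ℕ} (hn : 2 ≤ n) (hm : n ≤ m) (hp : p ≠ n - 2) :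
    runw n (some (fsS n (by omega))) (blk m p) = some (fsS n (by omega)) := by
  have hn1 : 1 ≤ n := by omega
  have hblk : blk m p = [true] ++ (fs p ++ ([true] ++ sepw m)) := by simp [blk]
  rw [hblk, runw_append]
  -- first step: read `true` from the resting state
  have s1 : runw n (some (fsS n hn1)) [true] =
      some (pushS (fsS n hn1) ((fsS n hn1).1 ++ [true])) := by
    rw [runw_singleton]
    simp only [stp, pushS]
    rw [if_neg (show ¬((fsS n hn1).1 ++ [true] = uw n) from repF_ne_uw (by omega) [true])]
  rw [s1, runw_append, runw_fs]
  -- state after `t f^p`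
  set x := pushS (pushS (fsS n hn1) ((fsS n hn1).1 ++ [true]))
      ((pushS (fsS n hn1) ((fsS n hn1).1 ++ [true])).1 ++ fs p) with hx
  have hxval : x.1 = lastN (n - 1) (fs (n-1) ++ [true] ++ fs p) := by
    rw [hx]
    show lastN (n-1) (lastN (n-1) ((fsS n hn1).1 ++ [true]) ++ fs p) = _
    rw [lastN_append_absorb]
    rfl
  rw [runw_append]
  -- second `true` step: no detection since `p ≠ n - 2`
  have s2 : runw n (some x) [true] = some (pushS x (x.1 ++ [true])) := by
    rw [runw_singleton]
    simp only [stp, pushS]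
    rw [if_neg ?_]
    rw [hxval]
    by_cases hple : n - 1 ≤ p
    · rw [lastN_append_right _ (by simp [fs]; omega)]
      simp only [fs, lastN_replicate]
      exact repF_ne_uw (by omega) _
    · -- p ≤ n - 3
      have hdec : fs (n-1) ++ [true] ++ fs p =
          fs (p+1) ++ (fs (n-2-p) ++ ([true] ++ fs p)) := by
        have hn1 : n - 1 = (p+1) + (n-2-p) := by omega
        simp only [fs, hn1, List.replicate_add, List.append_assoc]
      have hlen : lastN (n-1) (fs (n-1) ++ [true] ++ fs p) = fs (n-2-p) ++ ([true] ++ fs p) := by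
        rw [hdec]
        show lastN (n-1) _ = _
        unfold lastN
        have l1 : (fs (p+1) ++ (fs (n-2-p) ++ ([true] ++ fs p))).length = n + p := by
          simp [fs]; omega
        rw [l1]
        have l2 : n + p - (n-1) = (fs (p+1)).length := by simp [fs]; omega
        rw [l2, List.drop_left]
      rw [hlen]
      rw [List.append_assoc]
      exact repF_ne_uw (by omega) _
  rw [s2]
  -- final separator
  exact runw_fs_long hn1 (by simp [sepw, fs]; omega) _

/-- reading the block `n-2` from the resting state: detection -/
theorem runw_blk_detect {n m : ℕ} (hn : 2 ≤ n) :
    runw n (some (fsS n (by omega))) (blk m (n - 2)) = none := by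
  have hn1 : 1 ≤ n := by omega
  have hblk : blk m (n-2) = [true] ++ (fs (n-2) ++ ([true] ++ sepw m)) := by simp [blk]
  rw [hblk, runw_append]
  have s1 : runw n (some (fsS n hn1)) [true] =
      some (pushS (fsS n hn1) ((fsS n hn1).1 ++ [true])) := by
    rw [runw_singleton]
    simp only [stp, pushS]
    rw [if_neg (show ¬((fsS n hn1).1 ++ [true] = uw n) from repF_ne_uw (by omega) [true])]
  rw [s1, runw_append, runw_fs]
  set x := pushS (pushS (fsS n hn1) ((fsS n hn1).1 ++ [true]))
      ((pushS (fsS n hn1) ((fsS n hn1).1 ++ [true])).1 ++ fs (n-2)) with hx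
  have hxval : x.1 = [true] ++ fs (n-2) := by
    rw [hx]
    show lastN (n-1) (lastN (n-1) ((fsS n hn1).1 ++ [true]) ++ fs (n-2)) = _
    rw [lastN_append_absorb]
    show lastN (n-1) ((fs (n-1) ++ [true]) ++ fs (n-2)) = _
    rw [List.append_assoc]
    unfold lastN
    have l1 : (fs (n-1) ++ ([true] ++ fs (n-2))).length = 2*n - 2 := by simp [fs]; omega
    rw [l1]
    have l2 : 2*n - 2 - (n-1) = (fs (n-1)).length := by simp [fs]; omega
    rw [l2, List.drop_left]
  rw [runw_append]
  have s2 : runw n (some x) [true] = none := by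
    rw [runw_singleton]
    simp only [stp]
    rw [if_pos ?_]
    rw [hxval]
    simp [uw, fs]
  rw [s2, runw_none]

/-- reading a sequence of blocks from the resting state -/
theorem runw_blocks {n m : ℕ} (hn : 2 ≤ n) (hm : n ≤ m) (ℓ : List ℕ) :
    runw n (some (fsS n (by omega))) (ℓ.flatMap (blk m)) =
      if (n - 2) ∈ ℓ then none else some (fsS n (by omega)) := by
  induction ℓ with
  | nil => simp [runw]
  | cons p ℓ ih =>
    rw [List.flatMap_cons, runw_append]
    by_cases hp : p = n - 2
    · subst hp
      rw [runw_blk_detect hn, runw_none, if_pos (by simp)]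
    · rw [runw_blk hn hm hp, ih]
      by_cases hmem : (n-2) ∈ ℓ
      · rw [if_pos hmem, if_pos (by simp [hmem])]
      · rw [if_neg hmem, if_neg (by simp [hmem, Ne.symm hp])]

/-- the main run computation -/
theorem runw_wrd {n m : ℕ} (P : ℕ → Bool) (hn : 2 ≤ n) (hm : n ≤ m) (s : SCar n) :
    runw n (some s) (wrd P m) = if P (n - 2) then none else some (fsS n (by omega)) := by
  unfold wrd
  rw [runw_append]
  rw [show runw n (some s) (sepw m) = some (fsS n (by omega)) from
    runw_fs_long _ (by simp [sepw, fs]; omega) s]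
  rw [runw_blocks hn hm]
  congr 1
  simp only [List.mem_filter, List.mem_range, eq_iff_iff]
  constructor
  · rintro ⟨_, h⟩; exact h
  · intro h; exact ⟨by omega, h⟩

theorem trunc_eq_z_of_long {n : ℕ} {w : List Bool} (h : n < w.length) :
    trunc n w = TCar.z n := by
  apply Subtype.ext
  simp [trunc, TCar.z]
  omega

/-- stabilization of the coordinates of the approximating words, `n ≥ 2` -/
theorem ev_wrd_stable {n m m' : ℕ} (P : ℕ → Bool) (hn : 2 ≤ n) (hm : n ≤ m) (hm' : n ≤ m') :
    ev n (wrd P m) = ev n (wrd P m') := by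
  apply Prod.ext
  · show trunc n _ = trunc n _
    rw [trunc_eq_z_of_long (by have := wrd_length P m; omega),
      trunc_eq_z_of_long (by have := wrd_length P m'; omega)]
  · funext q
    show runw n q _ = runw n q _
    cases q with
    | none => rw [runw_none, runw_none]
    | some s => rw [runw_wrd P hn hm, runw_wrd P hn hm']

theorem ev_zero_stable {w w' : List Bool} (h : w ≠ []) (h' : w' ≠ []) :
    ev 0 w = ev 0 w' := by
  apply Prod.ext
  · show trunc 0 _ = trunc 0 _
    rw [trunc_eq_z_of_long (List.length_pos_iff.mpr h), trunc_eq_z_of_long (List.length_pos_iff.mpr h')]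
  · funext q
    cases q with
    | none => show runw _ _ _ = runw _ _ _; rw [runw_none, runw_none]
    | some s => exact absurd s.2 (by omega)

theorem stp_one (s : SCar 1) (c : Bool) : stp 1 (some s) c = some ⟨[], by simp⟩ := by
  have hs : s.1 = [] := List.length_eq_zero_iff.mp (by have := s.2; omega)
  simp only [stp]
  rw [if_neg ?_]
  · congr 1
    apply Subtype.ext
    show lastN 0 _ = []
    unfold lastN
    rw [Nat.sub_zero, List.drop_length]
  · rw [hs]
    intro hc
    have hlen := congrArg List.length hc
    simp only [uw, List.length_cons, List.length_append, List.length_replicate,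
      List.length_nil] at hlen
    omega

theorem runw_one {w : List Bool} (h : w ≠ []) (s : SCar 1) :
    runw 1 (some s) w = some ⟨[], by simp⟩ := by
  induction w using List.reverseRecOn with
  | nil => exact absurd rfl h
  | append_singleton w c ih =>
    rcases List.eq_nil_or_concat' w with rfl | hw
    · rw [show ([] ++ [c] : List Bool) = [c] by simp, runw_singleton, stp_one]
    · have hw' : w ≠ [] := by rintro rfl; simp at hw
      rw [runw_append, ih hw', runw_singleton, stp_one]

theorem ev_one_stable {w w' : List Bool} (h : 1 < w.length) (h' : 1 < w'.length) :
    ev 1 w = ev 1 w' := by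
  have hne : w ≠ [] := by intro hh; rw [hh] at h; simp at h
  have hne' : w' ≠ [] := by intro hh; rw [hh] at h'; simp at h'
  apply Prod.ext
  · show trunc 1 _ = trunc 1 _
    rw [trunc_eq_z_of_long h, trunc_eq_z_of_long h']
  · funext q
    show runw 1 q w = runw 1 q w'
    cases q with
    | none => rw [runw_none, runw_none]
    | some s => rw [runw_one hne, runw_one hne']

/-- the limit point attached to `P` -/
def EP (P : ℕ → Bool) : PP := fun n => ev n (wrd P (max n 2))

theorem EP_eq_ev (P : ℕ → Bool) {n N : ℕ} (h : n ≤ N) :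
    ev n (wrd P (max N 2)) = EP P n := by
  match n, h with
  | 0, _ => exact ev_zero_stable (wrd_ne_nil _ _) (wrd_ne_nil _ _)
  | 1, _ =>
    exact ev_one_stable (by have := wrd_length P (max N 2); omega)
      (by have := wrd_length P (max 1 2); omega)
  | (k+2), h =>
    exact ev_wrd_stable P (by omega) (by omega) (by omega)

end Aux3
section Aux4

/-- the closed subsemigroup generated by the two letters -/
noncomputable def KS : Subsemigroup PP := GG.topologicalClosure

abbrev SS : Type := {x : PP // x ∈ KS}

noncomputable instance : Semigroup SS := inferInstanceAs (Semigroup KS)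
instance : TopologicalSpace SS := inferInstanceAs (TopologicalSpace {x : PP // x ∈ KS})

theorem SS.coe_mul (a b : SS) : (a * b).1 = a.1 * b.1 := rfl

theorem KS_coe : (KS : Set PP) = closure (GG : Set PP) := rfl

/-- the limit point lies in the closed generated subsemigroup -/
theorem EP_mem_KS (P : ℕ → Bool) : EP P ∈ KS := by
  show EP P ∈ closure (GG : Set PP)
  rw [mem_closure_iff]
  intro o ho hmem
  obtain ⟨I, u, hIu, hsub⟩ := isOpen_pi_iff.1 ho _ hmem
  set N := I.sup id with hN
  refine ⟨EW (wrd P (max N 2)), hsub ?_, EW_mem_GG (wrd_ne_nil _ _)⟩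
  intro a ha
  have haN : a ≤ N := Finset.le_sup (f := id) ha
  show ev a (wrd P (max N 2)) ∈ u a
  rw [EP_eq_ev P haN]
  exact (hIu a ha).2

theorem EP_inj : Function.Injective EP := by
  intro P Q h
  funext p
  have h2 : (2:ℕ) ≤ p + 2 := by omega
  have hmax : max (p+2) 2 = p+2 := by omega
  have hc := congrFun h (p+2)
  simp only [EP, hmax] at hc
  have hq : runw (p+2) (some ⟨[], by simp⟩) (wrd P (p+2)) =
      runw (p+2) (some ⟨[], by simp⟩) (wrd Q (p+2)) :=
    congrFun (congrArg Prod.snd hc) (some ⟨[], by simp⟩)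
  rw [runw_wrd P h2 le_rfl, runw_wrd Q h2 le_rfl] at hq
  have hpp : p + 2 - 2 = p := by omega
  rw [hpp] at hq
  by_cases hP : P p <;> by_cases hQ : Q p <;> simp [hP, hQ] at hq ⊢

/-- the two generators, as elements of `SS` -/
noncomputable def genF : SS := ⟨EW [false], GG.le_topologicalClosure (EW_mem_GG (by simp))⟩
noncomputable def genT : SS := ⟨EW [true], GG.le_topologicalClosure (EW_mem_GG (by simp))⟩

theorem SS_dense_gen :
    closure ((Subsemigroup.closure {genF, genT} : Subsemigroup SS) : Set SS) = Set.univ := by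
  apply Set.eq_univ_of_forall
  intro x
  rw [closure_subtype]
  have himg : Subtype.val '' ((Subsemigroup.closure {genF, genT} : Subsemigroup SS) : Set SS) =
      (GG : Set PP) := by
    have h1 : (Subsemigroup.closure {genF, genT}).map (MulMemClass.subtype KS) =
        Subsemigroup.closure ((MulMemClass.subtype KS) '' {genF, genT}) :=
      MulHom.map_mclosure _ _
    have h2 : (MulMemClass.subtype KS) '' ({genF, genT} : Set SS) = {EW [false], EW [true]} := by
      rw [Set.image_pair]
      rfl
    calc Subtype.val '' ((Subsemigroup.closure {genF, genT} : Subsemigroup SS) : Set SS)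
        = ((Subsemigroup.closure {genF, genT}).map (MulMemClass.subtype KS) : Set PP) := by
          rw [Subsemigroup.coe_map]; rfl
      _ = (GG : Set PP) := by rw [h1, h2]; rfl
  rw [himg]
  exact x.2

theorem SS_uncountable : ¬ Countable SS := by
  classical
  intro hcnt
  have hΦ : Function.Injective (fun P : ℕ → Bool => (⟨EP P, EP_mem_KS P⟩ : SS)) := by
    intro P Q h
    exact EP_inj (congrArg Subtype.val h)
  haveI : Countable SS := hcnt
  haveI : Countable {x : PP // x ∈ KS} := hcnt
  have : Countable (ℕ → Bool) := hΦ.countable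
  have h2 : Countable (Set ℕ) := by
    have hinj : Function.Injective (fun (s : Set ℕ) (n : ℕ) => decide (n ∈ s)) := by
      intro s t hst
      ext n
      have := congrFun hst n
      simpa using this
    exact hinj.countable
  obtain ⟨f, hf⟩ := (countable_iff_exists_injective (Set ℕ)).1 h2
  exact Function.cantor_injective f hf

theorem SS_not_loc_countable : ¬ IsLocCountable SS := by
  intro h
  have hc := h {genF, genT} (Set.toFinite _)
  rw [SS_dense_gen] at hc
  exact SS_uncountable (Set.countable_univ_iff.mp hc)

instance : T2Space SS := inferInstanceAs (T2Space {x : PP // x ∈ KS})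
instance : TotallyDisconnectedSpace SS :=
  inferInstanceAs (TotallyDisconnectedSpace {x : PP // x ∈ KS})

/-- profiniteness of `SS` -/
theorem SS_profinite : IsProfiniteSgp SS := by
  refine ⟨⟨?_⟩, ?_, ?_, ?_⟩
  · -- continuous multiplication
    apply Continuous.subtype_mk
    exact continuous_mul.comp
      ((continuous_subtype_val.comp continuous_fst).prodMk
        (continuous_subtype_val.comp continuous_snd))
  · -- compact
    have hcl : IsClosed (KS : Set PP) := GG.isClosed_topologicalClosure
    exact isCompact_iff_compactSpace.mp hcl.isCompact
  · exact inferInstance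
  · exact inferInstance

end Aux4
section Aux5

/-- the set of adjacent pairs of a sequence -/
def pairSet {α : Type} (x : ℕ → α) (k : ℕ) : Set (α × α) := {p | ∃ i < k, p = (x i, x (i+1))}

/-- membership property for the locally finite pseudovariety `V`: the value of a product
depends only on the first factor, the last factor, and the set of adjacent pairs. -/
def Vprop (S : Type) [Semigroup S] : Prop :=
  ∀ (x y : ℕ → S) (k₁ k₂ : ℕ), x 0 = y 0 → x k₁ = y k₂ → pairSet x k₁ = pairSet y k₂ →
    prodFrom x k₁ = prodFrom y k₂

/-- our locally finite pseudovariety -/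
def Vpv : Set FinSgp := {S | Vprop S.carrier}

theorem map_prodFrom {S T : Type} [Semigroup S] [Semigroup T] (φ : S →ₙ* T) (f : ℕ → S) :
    ∀ k, φ (prodFrom f k) = prodFrom (fun i => φ (f i)) k
  | 0 => rfl
  | k+1 => by
    show φ (prodFrom f k * f (k+1)) = prodFrom (fun i => φ (f i)) k * φ (f (k+1))
    rw [map_mul, map_prodFrom φ f k]

theorem pairSet_comp {α β : Type} (g : α → β) (x : ℕ → α) (k : ℕ) :
    pairSet (fun i => g (x i)) k = (Prod.map g g) '' pairSet x k := by
  ext p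
  constructor
  · rintro ⟨i, hi, rfl⟩
    exact ⟨(x i, x (i+1)), ⟨i, hi, rfl⟩, rfl⟩
  · rintro ⟨q, ⟨i, hi, rfl⟩, rfl⟩
    exact ⟨i, hi, rfl⟩

/-- almost-constant functions on the state space -/
def ACp {n : ℕ} (g : FE n) (c : QC n) : Prop := g none = none ∧ ∀ q, g q = none ∨ g q = c

theorem AC_prod {n : ℕ} (x : ℕ → FE n) (c : ℕ → QC n) (hAC : ∀ i, ACp (x i) (c i)) :
    ∀ (k : ℕ) (q : QC n),
      ((x 0 q = none ∨ ∃ i < k, x (i+1) (c i) = none) → prodFrom x k q = none) ∧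
      (¬(x 0 q = none ∨ ∃ i < k, x (i+1) (c i) = none) → prodFrom x k q = c k) := by
  intro k
  induction k with
  | zero =>
    intro q
    constructor
    · rintro (h | ⟨i, hi, _⟩)
      · exact h
      · omega
    · intro h
      rcases (hAC 0).2 q with h0 | h0
      · exact absurd (Or.inl h0) h
      · exact h0
  | succ k ih =>
    intro q
    have hv : prodFrom x (k+1) q = x (k+1) (prodFrom x k q) := rfl
    by_cases hc : x 0 q = none ∨ ∃ i < k, x (i+1) (c i) = none
    · have hn : prodFrom x k q = none := (ih q).1 hc
      constructor
      · intro _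
        rw [hv, hn]
        exact (hAC (k+1)).1
      · intro hcon
        exfalso
        apply hcon
        rcases hc with h | ⟨i, hi, h⟩
        · exact Or.inl h
        · exact Or.inr ⟨i, by omega, h⟩
    · have hck : prodFrom x k q = c k := (ih q).2 hc
      by_cases h2 : x (k+1) (c k) = none
      · constructor
        · intro _
          rw [hv, hck]
          exact h2
        · intro hcon
          exact absurd (Or.inr ⟨k, by omega, h2⟩) hcon
      · constructor
        · rintro (h | ⟨i, hi, h⟩)
          · exact absurd (Or.inl h) hc
          · rcases Nat.lt_succ_iff_lt_or_eq.mp hi with hik | rfl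
            · exact absurd (Or.inr ⟨i, hik, h⟩) hc
            · exact absurd h h2
        · intro _
          rw [hv, hck]
          rcases (hAC (k+1)).2 (c k) with h | h
          · exact absurd h h2
          · exact h

theorem AC_bridge {n : ℕ} (z : ℕ → FE n) (cz : ℕ → QC n) (h : ∀ i, ACp (z i) (cz i))
    (k : ℕ) (q : QC n) :
    (z 0 q = none ∨ ∃ i < k, z (i+1) (cz i) = none) ↔
      (z 0 q = none ∨ ∃ p ∈ pairSet z k, ∀ r, p.2 (p.1 r) = none) := by
  constructor
  · rintro (h0 | ⟨i, hi, hn⟩)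
    · exact Or.inl h0
    · refine Or.inr ⟨(z i, z (i+1)), ⟨i, hi, rfl⟩, ?_⟩
      intro r
      show z (i+1) (z i r) = none
      rcases (h i).2 r with hr | hr
      · rw [hr]
        exact (h (i+1)).1
      · rw [hr]
        exact hn
  · rintro (h0 | ⟨p, ⟨i, hi, rfl⟩, hpt⟩)
    · exact Or.inl h0
    · by_cases hex : ∃ r, z i r = cz i
      · obtain ⟨r, hr⟩ := hex
        have hthis : z (i+1) (z i r) = none := hpt r
        rw [hr] at hthis
        exact Or.inr ⟨i, hi, hthis⟩
      · push_neg at hex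
        have hconst : ∀ r, z i r = none := by
          intro r
          rcases (h i).2 r with hr | hr
          · exact hr
          · exact absurd hr (hex r)
        cases i with
        | zero => exact Or.inl (hconst q)
        | succ j => exact Or.inr ⟨j, by omega, hconst (cz j)⟩

theorem AC_det {n : ℕ} (x y : ℕ → FE n) (k₁ k₂ : ℕ) (cx cy : ℕ → QC n)
    (hx : ∀ i, ACp (x i) (cx i)) (hy : ∀ i, ACp (y i) (cy i))
    (h0 : x 0 = y 0) (hk : x k₁ = y k₂) (hp : pairSet x k₁ = pairSet y k₂) :
    prodFrom x k₁ = prodFrom y k₂ := by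
  classical
  set cy' : ℕ → QC n := fun j => if j = k₂ then cx k₁ else cy j with hcy'
  have hy' : ∀ j, ACp (y j) (cy' j) := by
    intro j
    by_cases hj : j = k₂
    · subst hj
      simp only [hcy', if_pos rfl]
      rw [← hk]
      exact hx k₁
    · simp only [hcy', if_neg hj]
      exact hy j
  funext q
  by_cases hcond : x 0 q = none ∨ ∃ p ∈ pairSet x k₁, ∀ r, p.2 (p.1 r) = none
  · have hxn : prodFrom x k₁ q = none :=
      (AC_prod x cx hx k₁ q).1 ((AC_bridge x cx hx k₁ q).2 hcond)
    have hcond' : y 0 q = none ∨ ∃ p ∈ pairSet y k₂, ∀ r, p.2 (p.1 r) = none := by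
      rw [← h0, ← hp]
      exact hcond
    have hyn : prodFrom y k₂ q = none :=
      (AC_prod y cy' hy' k₂ q).1 ((AC_bridge y cy' hy' k₂ q).2 hcond')
    rw [hxn, hyn]
  · have hxc : prodFrom x k₁ q = cx k₁ :=
      (AC_prod x cx hx k₁ q).2 (fun hh => hcond ((AC_bridge x cx hx k₁ q).1 hh))
    have hcond' : ¬(y 0 q = none ∨ ∃ p ∈ pairSet y k₂, ∀ r, p.2 (p.1 r) = none) := by
      rw [← h0, ← hp]
      exact hcond
    have hyc : prodFrom y k₂ q = cy' k₂ :=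
      (AC_prod y cy' hy' k₂ q).2 (fun hh => hcond' ((AC_bridge y cy' hy' k₂ q).1 hh))
    rw [hxc, hyc]
    simp [hcy']

/-- the invariant: running from any proper state gives the sink or the canonical state -/
theorem runw_inv {n : ℕ} (w : List Bool) (s : SCar n) :
    runw n (some s) w = none ∨ runw n (some s) w = some (pushS s (s.1 ++ w)) := by
  induction w using List.reverseRecOn with
  | nil =>
    right
    show some s = _
    congr 1
    apply Subtype.ext
    show s.1 = lastN (n-1) (s.1 ++ [])
    rw [List.append_nil]
    exact (lastN_of_le (by have := s.2; omega)).symm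
  | append_singleton w c ih =>
    rw [runw_append]
    rcases ih with h | h
    · rw [h]
      left
      exact runw_none n [c]
    · rw [h, runw_singleton]
      simp only [stp]
      split_ifs with hdet
      · exact Or.inl rfl
      · right
        congr 1
        apply Subtype.ext
        show lastN (n-1) ((pushS s (s.1 ++ w)).1 ++ [c]) = lastN (n-1) (s.1 ++ (w ++ [c]))
        show lastN (n-1) (lastN (n-1) (s.1 ++ w) ++ [c]) = _
        rw [lastN_append_absorb, List.append_assoc]

theorem ev_AC {n : ℕ} {w : List Bool} (hn : 1 ≤ n) (hw : n - 1 ≤ w.length) :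
    ACp ((ev n w).2) (some ⟨lastN (n-1) w, by simp only [length_lastN]; omega⟩) := by
  constructor
  · exact runw_none n w
  · intro q
    cases q with
    | none => exact Or.inl (runw_none n w)
    | some s =>
      show runw n (some s) w = none ∨ runw n (some s) w = _
      rcases runw_inv w s with h | h
      · exact Or.inl h
      · right
        rw [h]
        congr 1
        apply Subtype.ext
        show lastN (n-1) (s.1 ++ w) = lastN (n-1) w
        exact lastN_append_right _ hw

end Aux5
section Aux6

/-- projection homs -/
def fstH {α β : Type} [Mul α] [Mul β] : (α × β) →ₙ* α := ⟨Prod.fst, fun _ _ => rfl⟩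
def sndH {α β : Type} [Mul α] [Mul β] : (α × β) →ₙ* β := ⟨Prod.snd, fun _ _ => rfl⟩

/-- the coordinate hom from the word subsemigroup to the truncation semigroup -/
def fstW (n : ℕ) : ↥(Wn n) →ₙ* TCar n :=
  (fstH (α := TCar n) (β := FE n)).comp (MulMemClass.subtype (Wn n))

theorem prodFrom_z {n : ℕ} (f : ℕ → TCar n) (hf : ∀ i, f i = TCar.z n) (k : ℕ) :
    prodFrom f k = TCar.z n := by
  induction k with
  | zero => exact hf 0
  | succ k ih =>
    show prodFrom f k * f (k+1) = TCar.z n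
    rw [ih, TCar.z_mul]

/-- a subsingleton semigroup satisfies `Vprop` -/
theorem Vprop_of_subsingleton (S : Type) [Semigroup S] [Subsingleton S] : Vprop S :=
  fun _ _ _ _ _ _ _ => Subsingleton.elim _ _

instance Wn_zero_subsingleton : Subsingleton ↥(Wn 0) := by
  constructor
  intro a b
  obtain ⟨w, hw, hev⟩ := Wn_char a.2
  obtain ⟨w', hw', hev'⟩ := Wn_char b.2
  apply Subtype.ext
  rw [← hev, ← hev']
  exact ev_zero_stable hw hw'

/-- the fibers of the truncation hom satisfy `Vprop`. -/
theorem fiber_Vprop (n : ℕ) (e : TCar n) (he : e * e = e) :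
    Vprop ↥(idemFiber (fstW n) e he) := by
  classical
  rcases Nat.eq_zero_or_pos n with rfl | hn
  · haveI : Subsingleton ↥(idemFiber (fstW 0) e he) :=
      ⟨fun a b => Subtype.ext (Subsingleton.elim _ _)⟩
    exact Vprop_of_subsingleton _
  intro x y k₁ k₂ h0 hk hp
  have he0 : e = TCar.z n := TCar.idem_eq_z e he
  -- fiber membership gives the zero first component
  have hz : ∀ a : ↥(idemFiber (fstW n) e he), fstW n a.1 = TCar.z n := by
    intro a
    have := a.2
    simp only [idemFiber, Subsemigroup.mem_mk, Set.mem_preimage, Set.mem_singleton_iff] at this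
    rw [this, he0]
  -- extract words
  have hword : ∀ a : ↥(idemFiber (fstW n) e he),
      ∃ w : List Bool, n - 1 ≤ w.length ∧ ev n w = a.1.1 := by
    intro a
    obtain ⟨w, hwne, hev⟩ := Wn_char a.1.2
    refine ⟨w, ?_, hev⟩
    have htr : trunc n w = TCar.z n := by
      have h1 : (ev n w).1 = trunc n w := rfl
      rw [hev] at h1
      rw [← h1]
      exact hz a
    have := trunc_z hwne htr
    omega
  choose wf hwlen hwev using hword
  -- the two coordinates
  apply Subtype.ext
  apply Subtype.ext
  apply Prod.ext
  · -- first coordinates: everything is zero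
    have hfst : ∀ (z : ℕ → ↥(idemFiber (fstW n) e he)) (k : ℕ),
        ((prodFrom z k).1.1).1 = TCar.z n := by
      intro z k
      have hmap : ((prodFrom z k).1.1).1 =
          prodFrom (fun i => fstW n (z i).1) k := by
        have := map_prodFrom ((fstW n).comp (MulMemClass.subtype (idemFiber (fstW n) e he))) z k
        exact this
      rw [hmap]
      exact prodFrom_z _ (fun i => hz (z i)) k
    show ((prodFrom x k₁).1.1).1 = ((prodFrom y k₂).1.1).1
    rw [hfst x k₁, hfst y k₂]
  · -- second coordinates: almost-constant analysis
    have hmap : ∀ (z : ℕ → ↥(idemFiber (fstW n) e he)) (k : ℕ),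
        ((prodFrom z k).1.1).2 = prodFrom (fun i => ((z i).1.1).2) k := by
      intro z k
      exact map_prodFrom
        ((sndH (α := TCar n) (β := FE n)).comp
          ((MulMemClass.subtype (Wn n)).comp
            (MulMemClass.subtype (idemFiber (fstW n) e he)))) z k
    show ((prodFrom x k₁).1.1).2 = ((prodFrom y k₂).1.1).2
    rw [hmap x k₁, hmap y k₂]
    -- each component is almost constant
    have hACx : ∀ i, ACp (((x i).1.1).2)
        (some ⟨lastN (n-1) (wf (x i)), by simp only [length_lastN]; omega⟩) := by
      intro i
      have := ev_AC (w := wf (x i)) hn (hwlen (x i))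
      rw [hwev (x i)] at this
      exact this
    have hACy : ∀ i, ACp (((y i).1.1).2)
        (some ⟨lastN (n-1) (wf (y i)), by simp only [length_lastN]; omega⟩) := by
      intro i
      have := ev_AC (w := wf (y i)) hn (hwlen (y i))
      rw [hwev (y i)] at this
      exact this
    refine AC_det _ _ k₁ k₂ _ _ hACx hACy ?_ ?_ ?_
    · rw [h0]
    · rw [hk]
    · have hcomp : ∀ (z : ℕ → ↥(idemFiber (fstW n) e he)) (k : ℕ),
          pairSet (fun i => ((z i).1.1).2) k =
            (Prod.map (fun a : ↥(idemFiber (fstW n) e he) => ((a.1.1).2))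
              (fun a : ↥(idemFiber (fstW n) e he) => ((a.1.1).2))) '' pairSet z k :=
        fun z k => pairSet_comp (fun a : ↥(idemFiber (fstW n) e he) => ((a.1.1).2)) z k
      rw [hcomp x k₁, hcomp y k₂, hp]

/-- the truncation semigroups are nilpotent -/
theorem TCar_nilpotent (n : ℕ) : IsNilpotentSgp (TCar n) := by
  refine ⟨TCar.z n, fun a => ⟨TCar.z_mul a, TCar.mul_z a⟩, n, ?_⟩
  intro f
  have key : ∀ (k : ℕ) (f : ℕ → TCar n),
      prodFrom f k = TCar.z n ∨ k + 1 ≤ (prodFrom f k).1.length := by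
    intro k
    induction k with
    | zero =>
      intro f
      by_cases h : (f 0).1 = []
      · exact Or.inl (Subtype.ext h)
      · right
        show 1 ≤ (f 0).1.length
        have : (f 0).1.length ≠ 0 := by simpa using h
        omega
    | succ k ih =>
      intro f
      have hval : (prodFrom f (k+1)).1 =
          vmul n (prodFrom f k).1 (f (k+1)).1 := TCar.mul_val _ _
      rcases ih f with h | h
      · left
        show prodFrom f k * f (k+1) = TCar.z n
        rw [h, TCar.z_mul]
      · by_cases hc : (prodFrom f k).1 ≠ [] ∧ (f (k+1)).1 ≠ [] ∧
            (prodFrom f k).1.length + (f (k+1)).1.length ≤ n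
        · right
          rw [hval]
          unfold vmul
          rw [if_pos hc]
          have h1 : (f (k+1)).1.length ≠ 0 := by simpa using hc.2.1
          simp only [List.length_append]
          omega
        · left
          apply Subtype.ext
          rw [hval]
          unfold vmul
          rw [if_neg hc]
          rfl
  rcases key n f with h | h
  · exact h
  · exact absurd (prodFrom f n).2 (by omega)

/-- `FinSgp.mk ↥(Wn n)` is a Mal'cev witness -/
theorem Wfin_witness (n : ℕ) : MalcevWitness Vpv NPv (FinSgp.mk ↥(Wn n)) := by
  refine ⟨FinSgp.mk (TCar n), fstW n, TCar_nilpotent n, ?_⟩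
  intro e he
  show Vprop ↥(idemFiber (fstW n) e he)
  exact fiber_Vprop n e he

theorem Wfin_mem_Malcev (n : ℕ) : FinSgp.mk ↥(Wn n) ∈ Malcev Vpv NPv :=
  Set.mem_sInter.2 (fun _ hU => hU.2 _ (Wfin_witness n))

end Aux6
section Aux7

theorem prodFrom_congr {S : Type} [Semigroup S] (f g : ℕ → S) :
    ∀ k, (∀ i ≤ k, f i = g i) → prodFrom f k = prodFrom g k
  | 0, h => h 0 le_rfl
  | k+1, h => by
    show prodFrom f k * f (k+1) = prodFrom g k * g (k+1)
    rw [prodFrom_congr f g k (fun i hi => h i (by omega)), h (k+1) le_rfl]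

theorem prodFrom_concat {S : Type} [Semigroup S] (f g : ℕ → S) (k : ℕ) :
    ∀ m, prodFrom (fun i => if i ≤ k then f i else g (i - k - 1)) (k + 1 + m) =
      prodFrom f k * prodFrom g m
  | 0 => by
    show prodFrom _ k * _ = _
    have h1 : prodFrom (fun i => if i ≤ k then f i else g (i - k - 1)) k = prodFrom f k :=
      prodFrom_congr _ _ k (fun i hi => if_pos hi)
    have h2 : (if k + 1 ≤ k then f (k+1) else g (k + 1 - k - 1)) = g 0 := by
      rw [if_neg (by omega)]
      congr 1
      omega
    rw [h1]
    show prodFrom f k * (if k + 1 ≤ k then f (k+1) else g (k + 1 - k - 1)) = _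
    rw [h2]
    rfl
  | m+1 => by
    have harith : k + 1 + (m + 1) = (k + 1 + m) + 1 := by omega
    rw [harith]
    show prodFrom _ (k+1+m) * (if k+1+m+1 ≤ k then f (k+1+m+1) else g (k+1+m+1 - k - 1)) = _
    rw [prodFrom_concat f g k m, if_neg (by omega)]
    have h3 : k + 1 + m + 1 - k - 1 = m + 1 := by omega
    rw [h3]
    exact mul_assoc _ _ _

theorem closure_rep {S : Type} [Semigroup S] (A : Set S) {s : S}
    (hs : s ∈ Subsemigroup.closure A) :
    ∃ (k : ℕ) (f : ℕ → S), (∀ i, f i ∈ A) ∧ prodFrom f k = s := by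
  induction hs using Subsemigroup.closure_induction with
  | mem a ha => exact ⟨0, fun _ => a, fun _ => ha, rfl⟩
  | mul a b _ _ iha ihb =>
    obtain ⟨k, f, hf, hfv⟩ := iha
    obtain ⟨m, g, hg, hgv⟩ := ihb
    refine ⟨k + 1 + m, fun i => if i ≤ k then f i else g (i - k - 1), ?_, ?_⟩
    · intro i
      show (if i ≤ k then f i else g (i - k - 1)) ∈ A
      by_cases hi : i ≤ k
      · rw [if_pos hi]; exact hf i
      · rw [if_neg hi]; exact hg _
    · rw [prodFrom_concat f g k m, hfv, hgv]

/-- `Vpv` is a pseudovariety -/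
theorem Vpv_pseudovariety : IsPseudovariety Vpv := by
  refine ⟨?_, ?_, ?_⟩
  · -- homomorphic images
    intro S hS T f hf
    intro x y k₁ k₂ h0 hk hp
    obtain ⟨g, hg⟩ := hf.hasRightInverse
    have key := hS (fun i => g (x i)) (fun i => g (y i)) k₁ k₂
      (congrArg g h0) (congrArg g hk)
      (by rw [pairSet_comp g x k₁, pairSet_comp g y k₂, hp])
    calc prodFrom x k₁ = prodFrom (fun i => f (g (x i))) k₁ :=
          prodFrom_congr _ _ k₁ (fun i _ => (hg (x i)).symm)
      _ = f (prodFrom (fun i => g (x i)) k₁) := (map_prodFrom f _ k₁).symm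
      _ = f (prodFrom (fun i => g (y i)) k₂) := by rw [key]
      _ = prodFrom (fun i => f (g (y i))) k₂ := map_prodFrom f _ k₂
      _ = prodFrom y k₂ := prodFrom_congr _ _ k₂ (fun i _ => hg (y i))
  · -- subsemigroups
    intro S hS T f hf
    intro x y k₁ k₂ h0 hk hp
    apply hf
    rw [map_prodFrom f x k₁, map_prodFrom f y k₂]
    exact hS (fun i => f (x i)) (fun i => f (y i)) k₁ k₂
      (congrArg f h0) (congrArg f hk)
      (by rw [pairSet_comp f x k₁, pairSet_comp f y k₂, hp])
  · -- products
    intro S hS T hT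
    intro x y k₁ k₂ h0 hk hp
    apply Prod.ext
    · rw [show (prodFrom x k₁).1 = prodFrom (fun i => (x i).1) k₁ from map_prodFrom fstH x k₁,
        show (prodFrom y k₂).1 = prodFrom (fun i => (y i).1) k₂ from map_prodFrom fstH y k₂]
      exact hS (fun i => (x i).1) (fun i => (y i).1) k₁ k₂
        (congrArg Prod.fst h0) (congrArg Prod.fst hk)
        (by rw [pairSet_comp Prod.fst x k₁, pairSet_comp Prod.fst y k₂, hp])
    · rw [show (prodFrom x k₁).2 = prodFrom (fun i => (x i).2) k₁ from map_prodFrom sndH x k₁,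
        show (prodFrom y k₂).2 = prodFrom (fun i => (y i).2) k₂ from map_prodFrom sndH y k₂]
      exact hT (fun i => (x i).2) (fun i => (y i).2) k₁ k₂
        (congrArg Prod.snd h0) (congrArg Prod.snd hk)
        (by rw [pairSet_comp Prod.snd x k₁, pairSet_comp Prod.snd y k₂, hp])

theorem Vprop_of_proV {S : Type} [Semigroup S] [TopologicalSpace S] (h : IsProV Vpv S) :
    Vprop S := by
  intro x y k₁ k₂ h0 hk hp
  by_contra hne
  obtain ⟨T, f, hT, _, _, hfne⟩ := h.2 _ _ hne
  apply hfne
  calc f (prodFrom x k₁) = prodFrom (fun i => f (x i)) k₁ := map_prodFrom f x k₁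
    _ = prodFrom (fun i => f (y i)) k₂ :=
        hT (fun i => f (x i)) (fun i => f (y i)) k₁ k₂
          (congrArg f h0) (congrArg f hk)
          (by rw [pairSet_comp f x k₁, pairSet_comp f y k₂, hp])
    _ = f (prodFrom y k₂) := (map_prodFrom f y k₂).symm

/-- `Vpv` is locally finite -/
theorem Vpv_locallyFinite : PVLocallyFinite Vpv := by
  intro S _ _ hpro hgen
  obtain ⟨A, hA, hgen⟩ := hgen
  haveI hT2 : T2Space S := hpro.1.2.2.1
  have hV : Vprop S := Vprop_of_proV hpro
  classical
  set C := ((Subsemigroup.closure A : Subsemigroup S) : Set S) with hC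
  have hfin : C.Finite := by
    rcases C.eq_empty_or_nonempty with hemp | ⟨s0, hs0⟩
    · rw [hemp]; exact Set.finite_empty
    have hrep : ∀ s, s ∈ C → ∃ (k : ℕ) (f : ℕ → S), (∀ i, f i ∈ A) ∧ prodFrom f k = s :=
      fun s hs => closure_rep A hs
    choose kk ff hmem hval using hrep
    set Φ : S → S × S × Set (S × S) := fun s =>
      if hs : s ∈ C then (ff s hs 0, ff s hs (kk s hs), pairSet (ff s hs) (kk s hs))
      else (ff s0 hs0 0, ff s0 hs0 (kk s0 hs0), pairSet (ff s0 hs0) (kk s0 hs0)) with hΦ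
    have hinj : Set.InjOn Φ C := by
      intro s hs t ht heq
      rw [hΦ] at heq
      simp only [dif_pos hs, dif_pos ht, Prod.mk.injEq] at heq
      obtain ⟨e1, e2, e3⟩ := heq
      rw [← hval s hs, ← hval t ht]
      exact hV _ _ _ _ e1 e2 e3
    have himg : Φ '' C ⊆ (A ×ˢ (A ×ˢ {P : Set (S × S) | P ⊆ A ×ˢ A})) := by
      rintro _ ⟨s, hs, rfl⟩
      rw [hΦ]
      simp only [dif_pos hs]
      refine ⟨hmem s hs 0, hmem s hs _, ?_⟩
      rintro p ⟨i, _, rfl⟩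
      exact ⟨hmem s hs i, hmem s hs (i+1)⟩
    have hBfin : (A ×ˢ (A ×ˢ {P : Set (S × S) | P ⊆ A ×ˢ A})).Finite :=
      hA.prod (hA.prod ((hA.prod hA).finite_subsets))
    exact Set.Finite.of_finite_image (hBfin.subset himg) hinj
  have hclosed : IsClosed C := hfin.isClosed
  rw [TopGen] at hgen
  rw [← hC, hclosed.closure_eq] at hgen
  rw [hgen] at hfin
  exact Set.finite_univ_iff.mp hfin

/-- `SS` is a pro-(V ⓜ N) semigroup -/
theorem SS_proV : IsProV (Malcev Vpv NPv) SS := by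
  refine ⟨SS_profinite, ?_⟩
  intro a b hab
  have hex : ∃ n, a.1 n ≠ b.1 n := by
    by_contra h
    push_neg at h
    exact hab (Subtype.ext (funext h))
  obtain ⟨n, hn⟩ := hex
  have hcoord : ∀ x : SS, x.1 n ∈ Wn n := by
    intro x
    have hx : x.1 ∈ closure (GG : Set PP) := x.2
    have hG : (GG : Set PP) ⊆ (fun y : PP => y n) ⁻¹' (Wn n : Set (CC n)) := by
      intro g hg
      induction hg using Subsemigroup.closure_induction with
      | mem a ha =>
        rcases ha with h | h
        · subst h; exact ev_mem_Wn (by simp)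
        · subst h; exact ev_mem_Wn (by simp)
      | mul a b _ _ iha ihb => exact (Wn n).mul_mem iha ihb
    have hcl : IsClosed ((fun y : PP => y n) ⁻¹' (Wn n : Set (CC n))) :=
      (isClosed_discrete _).preimage (continuous_apply n)
    exact closure_minimal hG hcl hx
  refine ⟨FinSgp.mk ↥(Wn n), ⟨fun x => ⟨x.1 n, hcoord x⟩, fun x y => rfl⟩,
    Wfin_mem_Malcev n, ?_, ?_, ?_⟩
  · -- continuity
    rw [continuous_def]
    intro s _
    have heq : (fun x : SS => (⟨x.1 n, hcoord x⟩ : ↥(Wn n))) ⁻¹' s =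
        (fun x : SS => x.1 n) ⁻¹' (Subtype.val '' s) := by
      ext x
      simp only [Set.mem_preimage]
      constructor
      · intro h
        exact ⟨_, h, rfl⟩
      · rintro ⟨w, hw, hwe⟩
        have : w = (⟨x.1 n, hcoord x⟩ : ↥(Wn n)) := Subtype.ext hwe
        rwa [this] at hw
    show IsOpen ((fun x : SS => (⟨x.1 n, hcoord x⟩ : ↥(Wn n))) ⁻¹' s)
    rw [heq]
    exact (isOpen_discrete _).preimage (show Continuous (fun x : SS => x.1 n) from
      (continuous_apply n).comp (continuous_subtype_val (p := fun x : PP => x ∈ KS)))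
  · -- surjectivity
    intro w
    obtain ⟨v, hv, hev⟩ := Wn_char w.2
    refine ⟨⟨EW v, GG.le_topologicalClosure (EW_mem_GG hv)⟩, ?_⟩
    apply Subtype.ext
    exact hev
  · -- separation
    intro h
    exact hn (congrArg Subtype.val h)

end Aux7

/-- There is a locally finite pseudovariety `V` such that `V ⓜ N` is
not locally countable. -/
theorem exists_locallyFinite_malcev_N_not_locallyCountable :
    ∃ V : Set FinSgp, IsPseudovariety V ∧ PVLocallyFinite V ∧
      ¬ PVLocallyCountable (Malcev V NPv) := by
  refine ⟨Vpv, Vpv_pseudovariety, Vpv_locallyFinite, ?_⟩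
  intro hlc
  exact SS_not_loc_countable (hlc SS SS_proV)
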